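/- Universal approximation theorem for vector-valued MLP networks with scalar output weights: Let n, N ≥ 1, let V = ℝⁿ with its standard basis, and let μ : V × V → V be an ℝ-bilinear multiplication such that for every k ∈ {0,…,n−1} the coordinate bilinear form B_k(x,y) = (μ(x,y))_k is non-degenerate. Let ψ : ℝ → ℝ be a Tauber–Wiener function such that ψ(t) → 0 as t → −∞ or ψ(t) → 0 as t → +∞, and let Ψ : V → V be the split activation (Ψ(x))_k = ψ(x_k). Then for every compact set K ⊆ Vᴺ, every continuous function f : Vᴺ → V, and every ε > 0, there exist M ∈ ℕ, real scalars α₁,…,α_M ∈ ℝ, weights w_{ij} ∈ V (1 ≤ i ≤ M, 1 ≤ j ≤ N), and biases b₁,…,b_M ∈ V such that ‖ Σ_{i=1}^M α_i · Ψ( Σ_{j=1}^N μ(w_{ij}, x_j) + b_i ) − f(x) ‖ ≤ ε for all x = (x₁,…,x_N) ∈ K. -/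

import Mathlib

open Filter

lemma norm_le_sum_abs_coord (n : ℕ) (v : EuclideanSpace ℝ (Fin n)) : ‖v‖ ≤ ∑ k, |v k| := by
  rw [EuclideanSpace.norm_eq]
  have h1 : ∀ k : Fin n, (0:ℝ) ≤ |v k| := fun k => abs_nonneg _
  have h2 : ∑ k, ‖v k‖ ^ 2 ≤ (∑ k, |v k|) ^ 2 := by
    rw [sq (∑ k, |v k|), Finset.sum_mul]
    refine Finset.sum_le_sum fun k _ => ?_
    rw [Real.norm_eq_abs, sq]
    exact mul_le_mul_of_nonneg_left
      (Finset.single_le_sum (fun k _ => h1 k) (Finset.mem_univ k)) (h1 k)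
  calc Real.sqrt (∑ k, ‖v k‖ ^ 2) ≤ Real.sqrt ((∑ k, |v k|) ^ 2) := Real.sqrt_le_sqrt h2
    _ = ∑ k, |v k| := Real.sqrt_sq (Finset.sum_nonneg fun k _ => h1 k)



lemma ridge_cos_dense {X : Type*} [NormedAddCommGroup X] [NormedSpace ℝ X]
    (K : Set X) (hK : IsCompact K) (g : X → ℝ) (hg : Continuous g)
    (ε : ℝ) (hε : 0 < ε) :
    ∃ m : ℕ, ∃ c : Fin m → ℝ, ∃ L : Fin m → (X →L[ℝ] ℝ), ∃ θ : Fin m → ℝ,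
      ∀ x ∈ K, |g x - ∑ i, c i * Real.cos (L i x + θ i)| ≤ ε := by
  rcases K.eq_empty_or_nonempty with rfl | hne
  · exact ⟨0, ![], ![], ![], by simp⟩
  haveI : Nonempty K := hne.to_subtype
  haveI : CompactSpace K := isCompact_iff_compactSpace.mp hK
  -- the set of generator functions
  have contgen : ∀ (L : X →L[ℝ] ℝ) (θ : ℝ),
      Continuous (fun x : K => Real.cos (L x + θ)) := fun L θ =>
    Real.continuous_cos.comp ((L.continuous.comp continuous_subtype_val).add continuous_const)
  set S : Set C(K, ℝ) :=
    {h | ∃ (L : X →L[ℝ] ℝ) (θ : ℝ), ∀ x : K, h x = Real.cos (L x + θ)} with hS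
  have hgen : ∀ (L : X →L[ℝ] ℝ) (θ : ℝ),
      (⟨fun x : K => Real.cos (L x + θ), contgen L θ⟩ : C(K, ℝ)) ∈ S :=
    fun L θ => ⟨L, θ, fun x => rfl⟩
  -- products of generators stay in span
  have hmulgen : ∀ a ∈ S, ∀ b ∈ S, a * b ∈ Submodule.span ℝ S := by
    rintro a ⟨L₁, θ₁, h₁⟩ b ⟨L₂, θ₂, h₂⟩
    have key : a * b = (1/2 : ℝ) •
        (⟨fun x : K => Real.cos ((L₁ + L₂) x + (θ₁ + θ₂)), contgen _ _⟩ : C(K, ℝ))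
        + (1/2 : ℝ) •
        (⟨fun x : K => Real.cos ((L₁ - L₂) x + (θ₁ - θ₂)), contgen _ _⟩ : C(K, ℝ)) := by
      have key2 : ∀ u v : ℝ, Real.cos u * Real.cos v
          = (1/2 : ℝ) * Real.cos (u + v) + (1/2 : ℝ) * Real.cos (u - v) := by
        intro u v
        rw [Real.cos_add, Real.cos_sub]
        ring
      ext x
      simp only [ContinuousMap.mul_apply, ContinuousMap.add_apply, ContinuousMap.smul_apply,
        ContinuousMap.coe_mk, h₁ x, h₂ x, smul_eq_mul, ContinuousLinearMap.add_apply,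
        ContinuousLinearMap.sub_apply]
      have e1 : (L₁ (x:X) + L₂ (x:X)) + (θ₁ + θ₂) = (L₁ (x:X) + θ₁) + (L₂ (x:X) + θ₂) := by ring
      have e2 : (L₁ (x:X) - L₂ (x:X)) + (θ₁ - θ₂) = (L₁ (x:X) + θ₁) - (L₂ (x:X) + θ₂) := by ring
      rw [e1, e2]
      exact key2 _ _
    rw [key]
    exact Submodule.add_mem _
      (Submodule.smul_mem _ _ (Submodule.subset_span (hgen _ _)))
      (Submodule.smul_mem _ _ (Submodule.subset_span (hgen _ _)))
  have hmul : ∀ a ∈ Submodule.span ℝ S, ∀ b ∈ Submodule.span ℝ S,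
      a * b ∈ Submodule.span ℝ S := by
    intro a ha
    induction ha using Submodule.span_induction with
    | mem a haS =>
      intro b hb
      induction hb using Submodule.span_induction with
      | mem b hbS => exact hmulgen _ haS _ hbS
      | zero => simpa using Submodule.zero_mem _
      | add b c _ _ ihb ihc => rw [mul_add]; exact Submodule.add_mem _ ihb ihc
      | smul r b _ ih => rw [mul_smul_comm]; exact Submodule.smul_mem _ _ ih
    | zero => intro b hb; simpa using Submodule.zero_mem _
    | add a c _ _ iha ihc => intro b hb; rw [add_mul]; exact Submodule.add_mem _ (iha b hb) (ihc b hb)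
    | smul r a _ ih => intro b hb; rw [smul_mul_assoc]; exact Submodule.smul_mem _ _ (ih b hb)
  have hone : (1 : C(K, ℝ)) ∈ Submodule.span ℝ S := by
    refine Submodule.subset_span ⟨0, 0, fun x => ?_⟩
    simp
  set A : Subalgebra ℝ C(K, ℝ) :=
    { carrier := (Submodule.span ℝ S : Submodule ℝ C(K, ℝ))
      mul_mem' := fun {a b} ha hb => hmul a ha b hb
      one_mem' := hone
      add_mem' := fun {a b} ha hb => Submodule.add_mem _ ha hb
      zero_mem' := Submodule.zero_mem _
      algebraMap_mem' := fun r => by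
        rw [Algebra.algebraMap_eq_smul_one]
        exact Submodule.smul_mem _ _ hone } with hA
  have hsep : A.SeparatesPoints := by
    intro x y hxy
    have hxy' : (x : X) ≠ (y : X) := Subtype.coe_ne_coe.mpr hxy
    obtain ⟨L, hL⟩ : ∃ L : X →L[ℝ] ℝ, L (x : X) ≠ L (y : X) :=
      SeparatingDual.exists_separating_of_ne hxy'
    have hd : L y - L x ≠ 0 := sub_ne_zero.mpr (Ne.symm hL)
    set w : X →L[ℝ] ℝ := (Real.pi / (L y - L x)) • L with hw
    set θ : ℝ := -(w x) with hθ
    refine ⟨_, ⟨(⟨fun z : K => Real.cos (w z + θ), contgen w θ⟩ : C(K, ℝ)),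
      Submodule.subset_span (hgen w θ), rfl⟩, ?_⟩
    simp only [ContinuousMap.coe_mk]
    have h1 : w (x : X) + θ = 0 := by simp [hθ]
    have h2 : w (y : X) + θ = Real.pi := by
      simp only [hθ, hw, ContinuousLinearMap.smul_apply, smul_eq_mul]
      field_simp
      ring
    rw [h1, h2]
    simp only [Real.cos_zero, Real.cos_pi]
    norm_num
  have hclose := ContinuousMap.subalgebra_topologicalClosure_eq_top_of_separatesPoints A hsep
  set g' : C(K, ℝ) := ⟨fun x : K => g x, hg.comp continuous_subtype_val⟩ with hg'
  have hg'mem : g' ∈ closure (A : Set C(K, ℝ)) := by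
    have : g' ∈ A.topologicalClosure := hclose ▸ Algebra.mem_top
    exact this
  obtain ⟨h, hhA, hdist⟩ := Metric.mem_closure_iff.mp hg'mem ε hε
  have hhspan : h ∈ Submodule.span ℝ S := hhA
  obtain ⟨m, c, v, hsum⟩ := Submodule.mem_span_set'.mp hhspan
  choose L θ hLθ using fun i => (v i).2
  refine ⟨m, c, L, θ, fun x hx => ?_⟩
  have hval : h ⟨x, hx⟩ = ∑ i, c i * Real.cos (L i x + θ i) := by
    rw [← hsum]
    rw [ContinuousMap.sum_apply]
    refine Finset.sum_congr rfl fun i _ => ?_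
    rw [ContinuousMap.smul_apply, hLθ i ⟨x, hx⟩, smul_eq_mul]
  calc |g x - ∑ i, c i * Real.cos (L i x + θ i)|
      = dist (g' ⟨x, hx⟩) (h ⟨x, hx⟩) := by rw [Real.dist_eq, ← hval]; rfl
    _ ≤ dist g' h := ContinuousMap.dist_apply_le_dist _
    _ ≤ ε := le_of_lt hdist

/-- `ψ` is a Tauber–Wiener function: every continuous real function can be uniformly
approximated on every closed interval by finite linear combinations of the form
`t ↦ ∑ i, α i * ψ (w i * t + θ i)`. -/
def IsTauberWiener (ψ : ℝ → ℝ) : Prop :=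
  ∀ f : ℝ → ℝ, Continuous f → ∀ a b : ℝ, ∀ ε : ℝ, 0 < ε →
    ∃ M : ℕ, ∃ α w θ : Fin M → ℝ,
      ∀ t ∈ Set.Icc a b, |f t - ∑ i, α i * ψ (w i * t + θ i)| ≤ ε

lemma scalar_UAT {ψ : ℝ → ℝ} (hTW : IsTauberWiener ψ) {X : Type*}
    [NormedAddCommGroup X] [NormedSpace ℝ X]
    (K : Set X) (hK : IsCompact K) (g : X → ℝ) (hg : Continuous g)
    (ε : ℝ) (hε : 0 < ε) :
    ∃ M : ℕ, ∃ α θ : Fin M → ℝ, ∃ L : Fin M → (X →L[ℝ] ℝ),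
      ∀ x ∈ K, |g x - ∑ i, α i * ψ (L i x + θ i)| ≤ ε := by
  obtain ⟨m, c, L, θ, hridge⟩ := ridge_cos_dense K hK g hg (ε/2) (by positivity)
  have hbd : ∀ i : Fin m, ∃ C : ℝ, ∀ x ∈ K, |L i x + θ i| ≤ C := by
    intro i
    obtain ⟨C, hC⟩ := isBounded_iff_forall_norm_le.mp
      (hK.image ((L i).continuous.add continuous_const)).isBounded
    exact ⟨C, fun x hx => hC _ (Set.mem_image_of_mem _ hx)⟩
  choose C hC using hbd
  have hpos : ∀ i : Fin m, (0:ℝ) < ε / (2*(m+1)*(|c i| + 1)) := by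
    intro i
    have h1 : (0:ℝ) < 2*((m:ℝ)+1) := by positivity
    have h2 : (0:ℝ) < |c i| + 1 := by positivity
    positivity
  choose Mf a wgt th happrox using fun i : Fin m =>
    hTW Real.cos Real.continuous_cos (-(C i)) (C i) _ (hpos i)
  set σ := (Σ i : Fin m, Fin (Mf i)) with hσ
  set e : σ ≃ Fin (Fintype.card σ) := Fintype.equivFin σ with he
  refine ⟨Fintype.card σ,
    fun p => c (e.symm p).1 * a (e.symm p).1 (e.symm p).2,
    fun p => wgt (e.symm p).1 (e.symm p).2 * θ (e.symm p).1 + th (e.symm p).1 (e.symm p).2,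
    fun p => wgt (e.symm p).1 (e.symm p).2 • L (e.symm p).1,
    fun x hx => ?_⟩
  set G : σ → ℝ := fun s =>
    c s.1 * a s.1 s.2 *
      ψ ((wgt s.1 s.2 • L s.1) x + (wgt s.1 s.2 * θ s.1 + th s.1 s.2)) with hG
  have hre : ∑ p : Fin (Fintype.card σ),
      (c (e.symm p).1 * a (e.symm p).1 (e.symm p).2) *
        ψ ((wgt (e.symm p).1 (e.symm p).2 • L (e.symm p).1) x
          + (wgt (e.symm p).1 (e.symm p).2 * θ (e.symm p).1 + th (e.symm p).1 (e.symm p).2))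
      = ∑ i : Fin m, c i * ∑ j : Fin (Mf i),
          a i j * ψ (wgt i j * (L i x + θ i) + th i j) := by
    have h1 : ∑ p : Fin (Fintype.card σ), G (e.symm p) = ∑ s : σ, G s :=
      Fintype.sum_equiv e.symm _ G (fun p => rfl)
    have h2 : ∑ s : σ, G s = ∑ i : Fin m, ∑ j : Fin (Mf i), G ⟨i, j⟩ := by
      rw [← Finset.univ_sigma_univ, Finset.sum_sigma]
    rw [h1, h2]
    refine Finset.sum_congr rfl fun i _ => ?_
    rw [Finset.mul_sum]
    refine Finset.sum_congr rfl fun j _ => ?_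
    simp only [hG, ContinuousLinearMap.smul_apply, smul_eq_mul]
    ring_nf
  rw [hre]
  have key : ∀ i : Fin m,
      |c i * Real.cos (L i x + θ i) - c i * ∑ j : Fin (Mf i),
          a i j * ψ (wgt i j * (L i x + θ i) + th i j)| ≤ ε / (2*((m:ℝ)+1)) := by
    intro i
    have hmem : L i x + θ i ∈ Set.Icc (-(C i)) (C i) := by
      have := hC i x hx
      exact ⟨neg_le_of_abs_le this, le_of_abs_le this⟩
    have h2 := happrox i _ hmem
    have hc1 : (0:ℝ) < |c i| + 1 := by positivity
    rw [← mul_sub, abs_mul]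
    calc |c i| * |Real.cos (L i x + θ i) - ∑ j : Fin (Mf i),
          a i j * ψ (wgt i j * (L i x + θ i) + th i j)|
        ≤ |c i| * (ε / (2*((m:ℝ)+1)*(|c i| + 1))) :=
          mul_le_mul_of_nonneg_left h2 (abs_nonneg _)
      _ = ε / (2*((m:ℝ)+1)) * (|c i| / (|c i| + 1)) := by
          field_simp
      _ ≤ ε / (2*((m:ℝ)+1)) * 1 := by
          refine mul_le_mul_of_nonneg_left ?_ (by positivity)
          rw [div_le_one hc1]
          linarith [abs_nonneg (c i)]
      _ = ε / (2*((m:ℝ)+1)) := mul_one _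
  have step2 : |∑ i : Fin m, c i * Real.cos (L i x + θ i)
      - ∑ i : Fin m, c i * ∑ j : Fin (Mf i),
          a i j * ψ (wgt i j * (L i x + θ i) + th i j)| ≤ ε / 2 := by
    rw [← Finset.sum_sub_distrib]
    calc |∑ i : Fin m, (c i * Real.cos (L i x + θ i) - c i * ∑ j : Fin (Mf i),
            a i j * ψ (wgt i j * (L i x + θ i) + th i j))|
        ≤ ∑ i : Fin m, |c i * Real.cos (L i x + θ i) - c i * ∑ j : Fin (Mf i),
            a i j * ψ (wgt i j * (L i x + θ i) + th i j)| :=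
          Finset.abs_sum_le_sum_abs _ _
      _ ≤ ∑ _i : Fin m, ε / (2*((m:ℝ)+1)) := Finset.sum_le_sum fun i _ => key i
      _ = m * (ε / (2*((m:ℝ)+1))) := by rw [Finset.sum_const, Finset.card_univ,
          Fintype.card_fin, nsmul_eq_mul]
      _ ≤ ε / 2 := by
          have hm1 : (0:ℝ) < 2*((m:ℝ)+1) := by positivity
          rw [mul_div_assoc', div_le_div_iff₀ hm1 (by norm_num : (0:ℝ) < 2)]
          have hm : (0:ℝ) ≤ (m:ℝ) := Nat.cast_nonneg m
          nlinarith [hε.le]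
  calc |g x - ∑ i : Fin m, c i * ∑ j : Fin (Mf i),
        a i j * ψ (wgt i j * (L i x + θ i) + th i j)|
      ≤ |g x - ∑ i : Fin m, c i * Real.cos (L i x + θ i)|
        + |∑ i : Fin m, c i * Real.cos (L i x + θ i)
          - ∑ i : Fin m, c i * ∑ j : Fin (Mf i),
              a i j * ψ (wgt i j * (L i x + θ i) + th i j)| := abs_sub_le _ _ _
    _ ≤ ε / 2 + ε / 2 := add_le_add (hridge x hx) step2
    _ = ε := add_halves ε



lemma realize_functional (n N : ℕ)
    (μ : EuclideanSpace ℝ (Fin n) →ₗ[ℝ] EuclideanSpace ℝ (Fin n) →ₗ[ℝ] EuclideanSpace ℝ (Fin n))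
    (hnd2 : ∀ k : Fin n, ∀ x : EuclideanSpace ℝ (Fin n), (∀ y, μ x y k = 0) → x = 0)
    (k : Fin n) (L : (Fin N → EuclideanSpace ℝ (Fin n)) →L[ℝ] ℝ) :
    ∃ w : Fin N → EuclideanSpace ℝ (Fin n),
      ∀ x : Fin N → EuclideanSpace ℝ (Fin n), ∑ j, μ (w j) (x j) k = L x := by
  set E := EuclideanSpace ℝ (Fin n) with hE
  set T : E →ₗ[ℝ] (E →ₗ[ℝ] ℝ) :=
    { toFun := fun v => (EuclideanSpace.projₗ k).comp (μ v)
      map_add' := fun a b => by ext y; simp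
      map_smul' := fun c a => by ext y; simp } with hT
  have hTapp : ∀ v y : E, T v y = μ v y k := fun v y => rfl
  have hinj : Function.Injective T := by
    rw [← LinearMap.ker_eq_bot, LinearMap.ker_eq_bot']
    intro v hv
    refine hnd2 k v fun y => ?_
    rw [← hTapp, hv]
    rfl
  have hfr : Module.finrank ℝ E = Module.finrank ℝ (E →ₗ[ℝ] ℝ) :=
    (Subspace.dual_finrank_eq (K := ℝ) (V := E)).symm
  have hsurj : Function.Surjective T :=
    (LinearMap.injective_iff_surjective_of_finrank_eq_finrank hfr).mp hinj
  have hw : ∀ j : Fin N, ∃ w : E, T w =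
      (L : (Fin N → E) →ₗ[ℝ] ℝ).comp (LinearMap.single ℝ (fun _ : Fin N => E) j) :=
    fun j => hsurj _
  choose w hwspec using hw
  refine ⟨w, fun x => ?_⟩
  have h1 : ∀ j, μ (w j) (x j) k = L (Pi.single j (x j)) := by
    intro j
    rw [← hTapp, hwspec j]
    rfl
  calc ∑ j, μ (w j) (x j) k = ∑ j, L (Pi.single j (x j)) :=
        Finset.sum_congr rfl fun j _ => h1 j
    _ = L (∑ j, Pi.single j (x j)) := (map_sum L _ _).symm
    _ = L x := by rw [Finset.univ_sum_single]


/-- Universal approximation theorem for vector-valued MLP networks with scalar output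
weights, on a non-degenerate algebra. -/
theorem universal_approximation_V_MLP_scalar_output
    (n N : ℕ) (hn : 1 ≤ n) (hN : 1 ≤ N)
    (μ : EuclideanSpace ℝ (Fin n) →ₗ[ℝ] EuclideanSpace ℝ (Fin n) →ₗ[ℝ] EuclideanSpace ℝ (Fin n))
    (hnd : ∀ k : Fin n,
      (∀ y : EuclideanSpace ℝ (Fin n), (∀ x, μ x y k = 0) → y = 0) ∧
      (∀ x : EuclideanSpace ℝ (Fin n), (∀ y, μ x y k = 0) → x = 0))
    (ψ : ℝ → ℝ) (hTW : IsTauberWiener ψ)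
    (hlim : Tendsto ψ atBot (nhds 0) ∨ Tendsto ψ atTop (nhds 0))
    (Ψ : EuclideanSpace ℝ (Fin n) → EuclideanSpace ℝ (Fin n))
    (hΨ : ∀ (x : EuclideanSpace ℝ (Fin n)) (k : Fin n), Ψ x k = ψ (x k))
    (K : Set (Fin N → EuclideanSpace ℝ (Fin n))) (hK : IsCompact K)
    (f : (Fin N → EuclideanSpace ℝ (Fin n)) → EuclideanSpace ℝ (Fin n)) (hf : Continuous f)
    (ε : ℝ) (hε : 0 < ε) :
    ∃ M : ℕ, ∃ α : Fin M → ℝ,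
      ∃ w : Fin M → Fin N → EuclideanSpace ℝ (Fin n),
      ∃ b : Fin M → EuclideanSpace ℝ (Fin n),
        ∀ x ∈ K,
          ‖(∑ i, α i • Ψ ((∑ j, μ (w i j) (x j)) + b i)) - f x‖ ≤ ε := by
  classical
  have hn' : (0:ℝ) < n := by exact_mod_cast hn
  -- the tail behaviour of ψ
  obtain ⟨τ, hτ1, htail⟩ : ∃ τ : ℝ, τ * τ = 1 ∧
      ∀ δ : ℝ, 0 < δ → ∃ T₀ : ℝ, ∀ u : ℝ, T₀ ≤ u → |ψ (τ * u)| ≤ δ := by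
    rcases hlim with h | h
    · refine ⟨-1, by norm_num, fun δ hδ => ?_⟩
      have h' : Tendsto (fun u : ℝ => ψ (-1 * u)) atTop (nhds 0) := by
        simpa [neg_one_mul] using h
      obtain ⟨T₀, hT₀⟩ := (Metric.tendsto_nhds.mp h' δ hδ).exists_forall_of_atTop
      exact ⟨T₀, fun u hu => by
        have := hT₀ u hu
        rw [Real.dist_eq, sub_zero] at this
        exact this.le⟩
    · refine ⟨1, by norm_num, fun δ hδ => ?_⟩
      have h' : Tendsto (fun u : ℝ => ψ (1 * u)) atTop (nhds 0) := by
        simpa [one_mul] using h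
      obtain ⟨T₀, hT₀⟩ := (Metric.tendsto_nhds.mp h' δ hδ).exists_forall_of_atTop
      exact ⟨T₀, fun u hu => by
        have := hT₀ u hu
        rw [Real.dist_eq, sub_zero] at this
        exact this.le⟩
  have hτabs : |τ| = 1 := by
    have := abs_mul τ τ
    rw [hτ1, abs_one] at this
    nlinarith [abs_nonneg τ, this]
  -- coordinate functions of f and their scalar networks
  have hcont : ∀ k : Fin n, Continuous (fun x : Fin N → EuclideanSpace ℝ (Fin n) => f x k) :=
    fun k => (EuclideanSpace.proj k).continuous.comp hf
  have hε2n : (0:ℝ) < ε / (2 * n) := by positivity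
  choose Mk αf θf Lf happ using fun k : Fin n =>
    scalar_UAT hTW K hK (fun x => f x k) (hcont k) (ε / (2 * n)) hε2n
  -- realize each linear functional through μ
  choose wf hw using fun (k : Fin n) (i : Fin (Mk k)) =>
    realize_functional n N μ (fun k' => (hnd k').2) k (Lf k i)
  -- uniform bound on all hidden coordinates over K
  have hCk : ∀ k : Fin n, ∃ C : ℝ, ∀ x ∈ K, ∀ i : Fin (Mk k), ∀ k' : Fin n,
      |∑ j, μ (wf k i j) (x j) k'| ≤ C := by
    intro k
    set F : (Fin N → EuclideanSpace ℝ (Fin n)) → ℝ := fun x => ∑ i : Fin (Mk k), ∑ k' : Fin n,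
      |∑ j, μ (wf k i j) (x j) k'| with hF
    have hFc : Continuous F := by
      refine continuous_finset_sum _ fun i _ => continuous_finset_sum _ fun k' _ => ?_
      refine continuous_abs.comp (continuous_finset_sum _ fun j _ => ?_)
      exact (EuclideanSpace.proj k').continuous.comp
        ((μ (wf k i j)).continuous_of_finiteDimensional.comp (continuous_apply j))
    obtain ⟨C, hC⟩ := isBounded_iff_forall_norm_le.mp (hK.image hFc).isBounded
    refine ⟨C, fun x hx i k' => ?_⟩
    have h1 : |∑ j, μ (wf k i j) (x j) k'| ≤ F x := by
      refine le_trans (Finset.single_le_sum (f := fun k'' : Fin n =>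
        |∑ j, μ (wf k i j) (x j) k''|) (fun _ _ => abs_nonneg _) (Finset.mem_univ k')) ?_
      exact Finset.single_le_sum (f := fun i' : Fin (Mk k) => ∑ k'' : Fin n,
        |∑ j, μ (wf k i' j) (x j) k''|)
        (fun _ _ => Finset.sum_nonneg fun _ _ => abs_nonneg _) (Finset.mem_univ i)
    have h2 : F x ≤ C := by
      have := hC (F x) (Set.mem_image_of_mem F hx)
      exact le_of_abs_le (by rwa [Real.norm_eq_abs] at this)
    linarith
  choose Ck hCk using hCk
  -- the junk tolerance for each network
  set A : Fin n → ℝ := fun k => ∑ i, |αf k i| with hA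
  have hApos : ∀ k, (0:ℝ) < A k + 1 := fun k =>
    lt_of_lt_of_le one_pos (by
      have : (0:ℝ) ≤ A k := Finset.sum_nonneg fun _ _ => abs_nonneg _
      linarith)
  set δk : Fin n → ℝ := fun k => ε / (2 * n^2 * (A k + 1)) with hδk
  have hδpos : ∀ k, 0 < δk k := fun k => by
    have := hApos k
    positivity
  choose T₀ hT₀ using fun k => htail (δk k) (hδpos k)
  -- biases
  set bias : (k : Fin n) → Fin (Mk k) → EuclideanSpace ℝ (Fin n) := fun k i =>
    (WithLp.equiv 2 (Fin n → ℝ)).symm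
      (fun k' => if k' = k then θf k i else τ * (T₀ k + Ck k)) with hbias
  have hbias_app : ∀ k i k', bias k i k' = if k' = k then θf k i else τ * (T₀ k + Ck k) :=
    fun k i k' => rfl
  -- assemble
  set σT := (Σ k : Fin n, Fin (Mk k)) with hσT
  set eT : σT ≃ Fin (Fintype.card σT) := Fintype.equivFin σT with heT
  refine ⟨Fintype.card σT,
    fun p => αf (eT.symm p).1 (eT.symm p).2,
    fun p => wf (eT.symm p).1 (eT.symm p).2,
    fun p => bias (eT.symm p).1 (eT.symm p).2,
    fun x hx => ?_⟩
  set Vec : σT → EuclideanSpace ℝ (Fin n) := fun s =>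
    αf s.1 s.2 • Ψ ((∑ j, μ (wf s.1 s.2 j) (x j)) + bias s.1 s.2) with hVec
  have hsum : ∑ p : Fin (Fintype.card σT),
      αf (eT.symm p).1 (eT.symm p).2 •
        Ψ ((∑ j, μ (wf (eT.symm p).1 (eT.symm p).2 j) (x j)) + bias (eT.symm p).1 (eT.symm p).2)
      = ∑ s : σT, Vec s :=
    Fintype.sum_equiv eT.symm _ Vec (fun p => rfl)
  rw [hsum]
  -- coordinate values
  have harg : ∀ (s : σT) (k' : Fin n),
      ((∑ j, μ (wf s.1 s.2 j) (x j)) + bias s.1 s.2) k'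
        = (∑ j, μ (wf s.1 s.2 j) (x j) k') + bias s.1 s.2 k' := by
    intro s k'
    have h1 : ((∑ j, μ (wf s.1 s.2 j) (x j)) + bias s.1 s.2) k'
        = EuclideanSpace.proj k' ((∑ j, μ (wf s.1 s.2 j) (x j)) + bias s.1 s.2) := rfl
    rw [h1, map_add, map_sum]
    rfl
  have hVecCoord : ∀ (s : σT) (k' : Fin n),
      Vec s k' = αf s.1 s.2 * ψ ((∑ j, μ (wf s.1 s.2 j) (x j) k') + bias s.1 s.2 k') := by
    intro s k'
    have h1 : Vec s k' = αf s.1 s.2 *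
        Ψ ((∑ j, μ (wf s.1 s.2 j) (x j)) + bias s.1 s.2) k' := rfl
    rw [h1, hΨ, harg]
  -- coordinate of total sum
  have hcoord : ∀ k' : Fin n, ((∑ s : σT, Vec s) - f x) k'
      = (∑ k : Fin n, ∑ i : Fin (Mk k),
          αf k i * ψ ((∑ j, μ (wf k i j) (x j) k') + bias k i k')) - f x k' := by
    intro k'
    have h1 : ((∑ s : σT, Vec s) - f x) k'
        = EuclideanSpace.proj k' ((∑ s : σT, Vec s) - f x) := rfl
    rw [h1, map_sub, map_sum]
    congr 1
    · rw [← Finset.univ_sigma_univ, Finset.sum_sigma]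
      exact Finset.sum_congr rfl fun k _ => Finset.sum_congr rfl fun i _ =>
        hVecCoord ⟨k, i⟩ k'
  -- per-coordinate bound
  have hcoordbound : ∀ k' : Fin n, |((∑ s : σT, Vec s) - f x) k'| ≤ ε / n := by
    intro k'
    rw [hcoord k']
    set S : Fin n → ℝ := fun k => ∑ i : Fin (Mk k),
      αf k i * ψ ((∑ j, μ (wf k i j) (x j) k') + bias k i k') with hS
    have hsplit : ∑ k : Fin n, S k = S k' + ∑ k ∈ Finset.univ.erase k', S k := by
      rw [Finset.add_sum_erase _ S (Finset.mem_univ k')]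
    -- own network
    have hown : |S k' - f x k'| ≤ ε / (2 * n) := by
      have hSk' : S k' = ∑ i, αf k' i * ψ (Lf k' i x + θf k' i) := by
        refine Finset.sum_congr rfl fun i _ => ?_
        rw [hbias_app, if_pos rfl, hw k' i x]
      rw [hSk']
      have := happ k' x hx
      rw [abs_sub_comm]
      exact this
    -- junk networks
    have hjunk : ∀ k ∈ Finset.univ.erase k', |S k| ≤ ε / (2 * n^2) := by
      intro k hk
      have hkne : k' ≠ k := (Finset.ne_of_mem_erase hk).symm
      have hterm : ∀ i : Fin (Mk k),
          |ψ ((∑ j, μ (wf k i j) (x j) k') + bias k i k')| ≤ δk k := by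
        intro i
        rw [hbias_app, if_neg hkne]
        set sj : ℝ := ∑ j, μ (wf k i j) (x j) k' with hsj
        have hsjb : |sj| ≤ Ck k := hCk k x hx i k'
        have hid : sj + τ * (T₀ k + Ck k) = τ * (τ * sj + (T₀ k + Ck k)) := by
          linear_combination (-sj) * hτ1
        rw [hid]
        refine hT₀ k _ ?_
        have : |τ * sj| ≤ Ck k := by rw [abs_mul, hτabs, one_mul]; exact hsjb
        have h2 := neg_le_of_abs_le this
        linarith
      calc |S k| ≤ ∑ i : Fin (Mk k),
            |αf k i * ψ ((∑ j, μ (wf k i j) (x j) k') + bias k i k')| :=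
            Finset.abs_sum_le_sum_abs _ _
        _ ≤ ∑ i : Fin (Mk k), |αf k i| * δk k := by
            refine Finset.sum_le_sum fun i _ => ?_
            rw [abs_mul]
            exact mul_le_mul_of_nonneg_left (hterm i) (abs_nonneg _)
        _ = A k * δk k := by rw [← Finset.sum_mul]
        _ ≤ (A k + 1) * δk k := by
            refine mul_le_mul_of_nonneg_right (by linarith) (hδpos k).le
        _ = ε / (2 * n^2) := by
            rw [hδk]
            have hA1 := (hApos k).ne'
            field_simp
    -- combine
    calc |(∑ k : Fin n, S k) - f x k'|
        = |(S k' - f x k') + ∑ k ∈ Finset.univ.erase k', S k| := by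
          rw [hsplit]; ring_nf
      _ ≤ |S k' - f x k'| + |∑ k ∈ Finset.univ.erase k', S k| := abs_add_le _ _
      _ ≤ ε / (2 * n) + ∑ k ∈ Finset.univ.erase k', |S k| :=
          add_le_add hown (Finset.abs_sum_le_sum_abs _ _)
      _ ≤ ε / (2 * n) + ∑ _k ∈ Finset.univ.erase k', ε / (2 * n^2) :=
          add_le_add_right (Finset.sum_le_sum hjunk) _
      _ = ε / (2 * n) + (Finset.univ.erase k').card * (ε / (2 * n^2)) := by
          rw [Finset.sum_const, nsmul_eq_mul]
      _ ≤ ε / (2 * n) + n * (ε / (2 * n^2)) := by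
          have hcard : ((Finset.univ.erase k').card : ℝ) ≤ n := by
            have := Finset.card_erase_le (a := k') (s := (Finset.univ : Finset (Fin n)))
            have h2 : (Finset.univ : Finset (Fin n)).card = n := by simp
            exact_mod_cast le_trans this (le_of_eq h2)
          refine add_le_add_right (mul_le_mul_of_nonneg_right hcard (by positivity)) _
      _ = ε / n := by
          have hne : (n:ℝ) ≠ 0 := ne_of_gt hn'
          field_simp
          ring
  -- conclude with the norm bound
  calc ‖(∑ s : σT, Vec s) - f x‖
      ≤ ∑ k' : Fin n, |((∑ s : σT, Vec s) - f x) k'| := norm_le_sum_abs_coord n _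
    _ ≤ ∑ _k' : Fin n, ε / n := Finset.sum_le_sum fun k' _ => hcoordbound k'
    _ = n * (ε / n) := by rw [Finset.sum_const, Finset.card_univ, Fintype.card_fin, nsmul_eq_mul]
    _ = ε := by field_simp
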